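/- Define R(h) = inf_{b ∈ ℝ} ( E_Q[f*(h + b)] − b ) for bounded measurable h, where Q is a probability measure and f* the convex conjugate of a proper lsc convex f with f(1)=0, f finite near 1, f = ∞ on negatives. Then the infimum in the definition of R is attained: there exists b* ∈ ℝ with E_Q[f*(h + b*)] − b* = R(h). -/

import Mathlib

open MeasureTheory Filter ENNReal Topology

/-- Convex conjugate of an extended-real-valued function on ℝ. -/
noncomputable def fStar (f : ℝ → EReal) (s : ℝ) : EReal := ⨆ x : ℝ, ((s * x : ℝ) : EReal) - f x

/-- Positive part of an extended real, as an extended nonnegative real. -/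
noncomputable def erealPos (x : EReal) : ℝ≥0∞ := if x = ⊤ then ⊤ else ENNReal.ofReal x.toReal

/-- Integral of an extended-real-valued function, with values in [-∞,∞]. -/
noncomputable def eintegral {Ω : Type*} [MeasurableSpace Ω] (Q : Measure Ω) (g : Ω → EReal) : EReal :=
  ((∫⁻ x, erealPos (g x) ∂Q) : EReal) - ((∫⁻ x, erealPos (-(g x)) ∂Q) : EReal)

/-- The set B(Ω,Σ) of bounded measurable real-valued functions. -/
def BM (Ω : Type*) [MeasurableSpace Ω] : Set (Ω → ℝ) :=
  {g | Measurable g ∧ ∃ C, ∀ x, |g x| ≤ C}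

/-- R(h) = inf_{b ∈ ℝ} ( E_Q[f*(h + b)] − b ). -/
noncomputable def Rfun {Ω : Type*} [MeasurableSpace Ω] (Q : Measure Ω) (f : ℝ → EReal)
    (h : Ω → ℝ) : EReal :=
  ⨅ b : ℝ, eintegral Q (fun x => fStar f (h x + b)) - (b : EReal)

/-! ### Auxiliary lemmas -/

lemma erealPos_coe (r : ℝ) : erealPos (r : EReal) = ENNReal.ofReal r := by
  simp [erealPos]

lemma erealPos_top : erealPos ⊤ = ⊤ := by simp [erealPos]

lemma erealPos_bot : erealPos ⊥ = 0 := by simp [erealPos]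

lemma erealPos_mono : Monotone erealPos := by
  intro x y hxy
  induction y with
  | bot => simp [le_bot_iff.1 hxy, erealPos_bot]
  | coe t =>
    induction x with
    | bot => simp [erealPos_bot]
    | coe s =>
      simp only [erealPos_coe]
      exact ENNReal.ofReal_le_ofReal (by exact_mod_cast hxy)
    | top => simp at hxy
  | top => simp [erealPos_top]

lemma fStar_mono {f : ℝ → EReal} (hneg : ∀ x : ℝ, x < 0 → f x = ⊤) :
    Monotone (fStar f) := by
  intro s s' hss'
  refine iSup_mono fun x => ?_
  rcases lt_or_ge x 0 with hx | hx
  · rw [hneg x hx, EReal.sub_top]; exact bot_le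
  · exact EReal.sub_le_sub (by exact_mod_cast mul_le_mul_of_nonneg_right hss' hx) le_rfl

lemma le_fStar {f : ℝ → EReal} (s x : ℝ) : ((s * x : ℝ) : EReal) - f x ≤ fStar f s :=
  le_iSup (fun x => ((s * x : ℝ) : EReal) - f x) x

lemma coe_le_fStar {f : ℝ → EReal} (h1 : f 1 = 0) (s : ℝ) : (s : EReal) ≤ fStar f s := by
  have := le_fStar (f := f) s 1
  rw [h1, mul_one] at this
  simpa using this

lemma real_le_fStar {f : ℝ → EReal} {x : ℝ} (hx : f x ≠ ⊤) (hx' : f x ≠ ⊥) (s : ℝ) :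
    ((s * x - (f x).toReal : ℝ) : EReal) ≤ fStar f s := by
  have := le_fStar (f := f) s x
  rwa [← EReal.coe_toReal hx hx', ← EReal.coe_sub] at this

lemma fStar_lsc {f : ℝ → EReal} (hbot : ∀ x, f x ≠ ⊥) :
    LowerSemicontinuous (fStar f) := by
  have : fStar f = fun s => ⨆ x : ℝ, ((s * x : ℝ) : EReal) - f x := rfl
  rw [this]
  apply lowerSemicontinuous_iSup
  intro x
  rcases eq_top_or_lt_top (f x) with hfx | hfx
  · have : (fun s : ℝ => ((s * x : ℝ) : EReal) - f x) = fun _ => (⊥ : EReal) := by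
      funext s; rw [hfx, EReal.sub_top]
    rw [this]; exact lowerSemicontinuous_const
  · have hne : f x ≠ ⊤ := hfx.ne
    have : (fun s : ℝ => ((s * x : ℝ) : EReal) - f x)
        = fun s : ℝ => ((s * x - (f x).toReal : ℝ) : EReal) := by
      funext s
      rw [EReal.coe_sub, EReal.coe_toReal hne (hbot x)]
    rw [this]
    apply Continuous.lowerSemicontinuous
    exact continuous_coe_real_ereal.comp (by continuity)

lemma coe_ofReal_ereal {r : ℝ} (hr : 0 ≤ r) : ((ENNReal.ofReal r : ℝ≥0∞) : EReal) = (r : EReal) := by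
  rw [EReal.coe_ennreal_ofReal, max_eq_left hr]

lemma le_eintegral {Ω : Type*} [MeasurableSpace Ω] (Q : Measure Ω) [IsProbabilityMeasure Q]
    (g : Ω → EReal) (c : ℝ) (hc : ∀ x, (c : EReal) ≤ g x) :
    (c : EReal) ≤ eintegral Q g := by
  have hP : ENNReal.ofReal c ≤ ∫⁻ x, erealPos (g x) ∂Q := by
    calc ENNReal.ofReal c = ∫⁻ _, ENNReal.ofReal c ∂Q := by simp
    _ ≤ ∫⁻ x, erealPos (g x) ∂Q := by
        refine lintegral_mono fun x => ?_
        rw [← erealPos_coe]; exact erealPos_mono (hc x)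
  have hN : ∫⁻ x, erealPos (-(g x)) ∂Q ≤ ENNReal.ofReal (-c) := by
    calc ∫⁻ x, erealPos (-(g x)) ∂Q ≤ ∫⁻ _, ENNReal.ofReal (-c) ∂Q := by
          refine lintegral_mono fun x => ?_
          rw [← erealPos_coe]
          exact erealPos_mono (by simpa using EReal.neg_le_neg_iff.2 (hc x))
    _ = ENNReal.ofReal (-c) := by simp
  have key : ((ENNReal.ofReal c : ℝ≥0∞) : EReal) - ((ENNReal.ofReal (-c) : ℝ≥0∞) : EReal) = (c : EReal) := by
    rcases le_or_gt 0 c with h | h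
    · rw [coe_ofReal_ereal h, ENNReal.ofReal_eq_zero.2 (by linarith)]
      simp
    · rw [ENNReal.ofReal_eq_zero.2 h.le, coe_ofReal_ereal (neg_nonneg.2 h.le)]
      simp only [EReal.coe_ennreal_zero]
      rw [show (0:EReal) = ((0:ℝ):EReal) from rfl, ← EReal.coe_sub]
      norm_num
  calc (c : EReal) = ((ENNReal.ofReal c : ℝ≥0∞) : EReal) - ((ENNReal.ofReal (-c) : ℝ≥0∞) : EReal) := key.symm
  _ ≤ eintegral Q g :=
      EReal.sub_le_sub (EReal.coe_ennreal_le_coe_ennreal_iff.2 hP)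
        (EReal.coe_ennreal_le_coe_ennreal_iff.2 hN)

lemma coe_ennreal_fin {a : ℝ≥0∞} (ha : a ≠ ⊤) : (a : EReal) = ((a.toReal : ℝ) : EReal) := by
  have h1 : (a : EReal) ≠ ⊤ := by simpa [EReal.coe_ennreal_eq_top_iff] using ha
  have h2 : (a : EReal) ≠ ⊥ := EReal.coe_ennreal_ne_bot a
  rw [← EReal.coe_toReal h1 h2, EReal.toReal_coe_ennreal]

lemma sub_eq_sub_of_add {a b c d : ℝ≥0∞} (hb : b ≠ ⊤) (hd : d ≠ ⊤) (h : a + d = c + b) :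
    (a : EReal) - (b : EReal) = (c : EReal) - (d : EReal) := by
  rcases eq_or_ne a ⊤ with ha | ha
  · have hc : c = ⊤ := by
      by_contra hc
      have : c + b ≠ ⊤ := ENNReal.add_ne_top.2 ⟨hc, hb⟩
      rw [← h, ha] at this; simp at this
    rw [ha, hc, coe_ennreal_fin hb, coe_ennreal_fin hd]
    simp [EReal.coe_ennreal_top, EReal.top_sub_coe]
  · have hc : c ≠ ⊤ := by
      intro hc
      rw [hc] at h
      rw [top_add] at h
      exact (ENNReal.add_ne_top.2 ⟨ha, hd⟩) h
    rw [coe_ennreal_fin ha, coe_ennreal_fin hb, coe_ennreal_fin hc, coe_ennreal_fin hd,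
      ← EReal.coe_sub, ← EReal.coe_sub]
    norm_cast
    have := congrArg ENNReal.toReal h
    rw [ENNReal.toReal_add ha hd, ENNReal.toReal_add hc hb] at this
    linarith

lemma erealPos_add_shift {y : EReal} {S : ℝ} (hS : 0 ≤ S) (hy : ((-S : ℝ) : EReal) ≤ y) :
    erealPos (y + (S : EReal)) + erealPos (-y) = erealPos y + ENNReal.ofReal S := by
  induction y with
  | bot => exact absurd hy (by simp)
  | coe t =>
    have ht : -S ≤ t := by exact_mod_cast hy
    rw [show ((t : EReal) + (S:EReal)) = ((t + S : ℝ) : EReal) from (EReal.coe_add t S).symm,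
      show (-(t : EReal)) = ((-t : ℝ) : EReal) from (EReal.coe_neg t).symm,
      erealPos_coe, erealPos_coe, erealPos_coe]
    rcases le_or_gt 0 t with h | h
    · rw [ENNReal.ofReal_eq_zero.2 (by linarith : -t ≤ 0), ENNReal.ofReal_add h hS, add_zero]
    · rw [ENNReal.ofReal_eq_zero.2 h.le, zero_add,
        ← ENNReal.ofReal_add (by linarith : (0:ℝ) ≤ t + S) (by linarith : (0:ℝ) ≤ -t)]
      ring_nf
  | top =>
    rw [show ((⊤ : EReal) + (S:EReal)) = ⊤ from by rw [EReal.top_add_coe],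
      erealPos_top, show (-(⊤:EReal)) = ⊥ from rfl, erealPos_bot]
    simp

lemma eintegral_eq_shift {Ω : Type*} [MeasurableSpace Ω] (Q : Measure Ω) [IsProbabilityMeasure Q]
    (g : Ω → EReal) (S : ℝ) (hS : 0 ≤ S) (hg : ∀ x, ((-S : ℝ) : EReal) ≤ g x)
    (hmeas : Measurable fun x => erealPos (-(g x))) :
    eintegral Q g = ((∫⁻ x, erealPos (g x + (S : EReal)) ∂Q : ℝ≥0∞) : EReal) - (S : EReal) := by
  have key : (∫⁻ x, erealPos (g x + (S : EReal)) ∂Q) + ∫⁻ x, erealPos (-(g x)) ∂Q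
      = (∫⁻ x, erealPos (g x) ∂Q) + ENNReal.ofReal S := by
    rw [← lintegral_add_right _ hmeas]
    have : ∀ x, erealPos (g x + (S : EReal)) + erealPos (-(g x))
        = erealPos (g x) + ENNReal.ofReal S := fun x => erealPos_add_shift hS (hg x)
    rw [lintegral_congr this, lintegral_add_right _ measurable_const, lintegral_const]
    simp
  have hN : (∫⁻ x, erealPos (-(g x)) ∂Q) ≠ ⊤ := by
    have : (∫⁻ x, erealPos (-(g x)) ∂Q) ≤ ENNReal.ofReal S := by
      calc (∫⁻ x, erealPos (-(g x)) ∂Q) ≤ ∫⁻ _, ENNReal.ofReal S ∂Q := by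
            refine lintegral_mono fun x => ?_
            rw [← erealPos_coe]
            refine erealPos_mono ?_
            have := EReal.neg_le_neg_iff.2 (hg x)
            rwa [← EReal.coe_neg, neg_neg] at this
      _ = ENNReal.ofReal S := by simp
    exact (lt_of_le_of_lt this ENNReal.ofReal_lt_top).ne
  rw [eintegral, sub_eq_sub_of_add hN ENNReal.ofReal_ne_top key.symm, coe_ofReal_ereal hS]

lemma ereal_sub_sub (x : EReal) (a b : ℝ) : x - (a : EReal) - (b : EReal) = x - ((a + b : ℝ) : EReal) := by
  induction x with
  | bot => simp [EReal.bot_sub]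
  | coe t =>
    norm_cast
    ring
  | top => rw [EReal.top_sub_coe, EReal.top_sub_coe, EReal.top_sub_coe]

lemma liminf_erealPos_shift (v : ℕ → EReal) (a : EReal) (S : ℝ)
    (h : a ≤ liminf v atTop) :
    erealPos (a + (S : EReal)) ≤ liminf (fun n => erealPos (v n + (S : EReal))) atTop := by
  rw [le_liminf_iff]
  intro c hc
  have hcne : c ≠ ⊤ := (lt_of_lt_of_le hc le_top).ne
  obtain ⟨y, hy1, hy2⟩ : ∃ y : ℝ, (y : EReal) < liminf v atTop ∧ c.toReal < y + S := by
    induction a with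
    | bot =>
      exfalso
      rw [show ((⊥ : EReal) + (S : EReal)) = ⊥ from EReal.bot_add _, erealPos_bot] at hc
      simp at hc
    | coe t₀ =>
      have hc' : c.toReal < t₀ + S := by
        rw [show ((t₀ : EReal) + (S : EReal)) = ((t₀ + S : ℝ) : EReal) from (EReal.coe_add _ _).symm,
          erealPos_coe] at hc
        exact (ENNReal.lt_ofReal_iff_toReal_lt hcne).1 hc
      obtain ⟨y, hy1, hy2⟩ := exists_between (show c.toReal - S < t₀ by linarith)
      exact ⟨y, lt_of_lt_of_le (by exact_mod_cast hy2) h, by linarith⟩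
    | top =>
      refine ⟨c.toReal + 1 - S, ?_, by linarith⟩
      have : liminf v atTop = ⊤ := top_le_iff.1 h
      rw [this]
      exact EReal.coe_lt_top _
  filter_upwards [eventually_lt_of_lt_liminf hy1] with n hn
  calc c < ENNReal.ofReal (y + S) := (ENNReal.lt_ofReal_iff_toReal_lt hcne).2 hy2
  _ = erealPos ((y + S : ℝ) : EReal) := (erealPos_coe _).symm
  _ ≤ erealPos (v n + (S : EReal)) := by
      refine erealPos_mono ?_
      rw [EReal.coe_add]
      exact add_le_add_left hn.le _

lemma lsc_le_liminf {g : ℝ → EReal} (hg : LowerSemicontinuous g) {u : ℕ → ℝ} {t : ℝ}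
    (hu : Tendsto u atTop (𝓝 t)) : g t ≤ liminf (fun n => g (u n)) atTop := by
  rw [le_liminf_iff]
  intro c hc
  exact hu.eventually (hg t c hc)

/-- The infimum in the definition of R(h) = inf_b ( E_Q[f*(h+b)] − b ) is attained. -/
theorem Rfun_attained {Ω : Type*} [MeasurableSpace Ω]
    (Q : Measure Ω) [IsProbabilityMeasure Q] (f : ℝ → EReal)
    (hlsc : LowerSemicontinuous f)
    (hconv : ∀ (x y a b : ℝ), 0 < a → 0 < b → a + b = 1 →
      f (a * x + b * y) ≤ (a : EReal) * f x + (b : EReal) * f y)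
    (hbot : ∀ x, f x ≠ ⊥) (h1 : f 1 = 0) (hneg : ∀ x : ℝ, x < 0 → f x = ⊤)
    (hfin : ∃ ε > (0:ℝ), ∀ x : ℝ, |x - 1| < ε → f x ≠ ⊤)
    (h : Ω → ℝ) (hh : h ∈ BM Ω)
    (hfinR : Rfun Q f h ≠ ⊤ ∧ Rfun Q f h ≠ ⊥) :
    ∃ b : ℝ, eintegral Q (fun x => fStar f (h x + b)) - (b : EReal) = Rfun Q f h := by
  classical
  obtain ⟨hmeas, C₀, hC₀⟩ := hh
  set C : ℝ := max C₀ 0 with hCdef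
  have hC : ∀ x, |h x| ≤ C := fun x => (hC₀ x).trans (le_max_left _ _)
  have hCnn : 0 ≤ C := le_max_right _ _
  obtain ⟨ε, εpos, hε⟩ := hfin
  set δ : ℝ := min (ε/2) (1/2) with hδdef
  have hδpos : 0 < δ := lt_min (by linarith) (by norm_num)
  have hδlt : δ < ε := lt_of_le_of_lt (min_le_left _ _) (by linarith)
  have hδle : δ ≤ 1/2 := min_le_right _ _
  have hp : f (1+δ) ≠ ⊤ := hε _ (by rw [add_sub_cancel_left, abs_of_pos hδpos]; exact hδlt)
  have hm : f (1-δ) ≠ ⊤ := by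
    refine hε _ ?_
    rw [show (1 - δ - 1 : ℝ) = -δ by ring, abs_neg, abs_of_pos hδpos]
    exact hδlt
  set cp : ℝ := (f (1+δ)).toReal with hcp
  set cm : ℝ := (f (1-δ)).toReal with hcm
  set G : ℝ → EReal := fun b => eintegral Q (fun x => fStar f (h x + b)) - (b : EReal) with hG
  have hRdef : Rfun Q f h = ⨅ b, G b := by unfold Rfun; simp only [hG]
  set r : ℝ := (Rfun Q f h).toReal with hr
  have hRr : Rfun Q f h = (r : EReal) := (EReal.coe_toReal hfinR.1 hfinR.2).symm
  set K : ℝ := (1+δ)*C + |cp| + (1-δ)*C + |cm| with hK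
  -- coercivity
  have coercive : ∀ b : ℝ, ((δ * |b| - K : ℝ) : EReal) ≤ G b := by
    intro b
    rcases le_or_gt 0 b with hb | hb
    · set v : ℝ := (b - C) * (1+δ) - cp with hv
      have hpt : ∀ x, (v : EReal) ≤ fStar f (h x + b) := by
        intro x
        calc (v : EReal) ≤ fStar f (b - C) := real_le_fStar hp (hbot _) (b - C)
        _ ≤ fStar f (h x + b) := fStar_mono hneg (by have := (abs_le.1 (hC x)).1; linarith)
      have h1' : (v : EReal) ≤ eintegral Q (fun x => fStar f (h x + b)) :=
        le_eintegral Q _ v hpt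
      calc ((δ * |b| - K : ℝ) : EReal) ≤ ((v - b : ℝ) : EReal) := by
            apply EReal.coe_le_coe_iff.2
            have h2 : |b| = b := abs_of_nonneg hb
            have h3 : cp ≤ |cp| := le_abs_self _
            have h4 : 0 ≤ (1-δ)*C := mul_nonneg (by linarith) hCnn
            have h5 : (0:ℝ) ≤ |cm| := abs_nonneg _
            rw [hv, hK]
            nlinarith
      _ = (v : EReal) - (b : EReal) := EReal.coe_sub _ _
      _ ≤ G b := EReal.sub_le_sub h1' le_rfl
    · set v : ℝ := (b - C) * (1-δ) - cm with hv
      have hpt : ∀ x, (v : EReal) ≤ fStar f (h x + b) := by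
        intro x
        calc (v : EReal) ≤ fStar f (b - C) := real_le_fStar hm (hbot _) (b - C)
        _ ≤ fStar f (h x + b) := fStar_mono hneg (by have := (abs_le.1 (hC x)).1; linarith)
      have h1' : (v : EReal) ≤ eintegral Q (fun x => fStar f (h x + b)) :=
        le_eintegral Q _ v hpt
      calc ((δ * |b| - K : ℝ) : EReal) ≤ ((v - b : ℝ) : EReal) := by
            apply EReal.coe_le_coe_iff.2
            have h2 : |b| = -b := abs_of_neg hb
            have h3 : cm ≤ |cm| := le_abs_self _
            have h4 : 0 ≤ (1+δ)*C := mul_nonneg (by linarith) hCnn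
            have h5 : (0:ℝ) ≤ |cp| := abs_nonneg _
            rw [hv, hK]
            nlinarith
      _ = (v : EReal) - (b : EReal) := EReal.coe_sub _ _
      _ ≤ G b := EReal.sub_le_sub h1' le_rfl
  -- minimizing sequence
  have hseq : ∀ n : ℕ, ∃ b : ℝ, G b < ((r + 1/(n+1) : ℝ) : EReal) := by
    intro n
    have hlt : Rfun Q f h < ((r + 1/(n+1) : ℝ) : EReal) := by
      rw [hRr]
      apply EReal.coe_lt_coe_iff.2
      have : (0:ℝ) < 1/((n:ℝ)+1) := by positivity
      linarith
    rw [hRdef] at hlt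
    exact iInf_lt_iff.1 hlt
  choose bseq hbseq using hseq
  set M : ℝ := (r + 1 + K)/δ with hM'
  have hMb : ∀ n, bseq n ∈ Set.Icc (-M) M := by
    intro n
    have h2 := lt_of_le_of_lt (coercive (bseq n)) (hbseq n)
    have h3 : δ * |bseq n| - K < r + 1/(n+1) := EReal.coe_lt_coe_iff.1 h2
    have h4 : 1/((n:ℝ)+1) ≤ 1 := by
      rw [div_le_one (by positivity)]
      linarith [Nat.cast_nonneg (α := ℝ) n]
    have h5 : |bseq n| ≤ M := by
      rw [hM', le_div_iff₀ hδpos]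
      nlinarith [abs_nonneg (bseq n)]
    exact Set.mem_Icc.2 (abs_le.1 h5)
  obtain ⟨bstar, hbstar, σ, hσ, hconvseq⟩ :=
    (isCompact_Icc : IsCompact (Set.Icc (-M) M)).tendsto_subseq hMb
  have hMnn : 0 ≤ M := by
    have := hMb 0
    rw [Set.mem_Icc] at this
    linarith [this.1, this.2]
  set S : ℝ := C + M + |r| + 1 with hS'
  have hSnn : 0 ≤ S := by
    have := abs_nonneg r
    rw [hS']; linarith
  have hlb : ∀ b ∈ Set.Icc (-M) M, ∀ x, ((-S : ℝ) : EReal) ≤ fStar f (h x + b) := by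
    intro b hb x
    rw [Set.mem_Icc] at hb
    calc ((-S : ℝ) : EReal) ≤ ((h x + b : ℝ) : EReal) := by
          apply EReal.coe_le_coe_iff.2
          have := (abs_le.1 (hC x)).1
          have := abs_nonneg r
          rw [hS']
          linarith [hb.1]
    _ ≤ fStar f (h x + b) := coe_le_fStar h1 _
  have measmono : ∀ b : ℝ, Measurable fun x => erealPos (fStar f (h x + b) + (S : EReal)) := by
    intro b
    have m1 : Monotone fun t : ℝ => erealPos (fStar f t + (S : EReal)) := fun t t' htt' =>
      erealPos_mono (add_le_add_left (fStar_mono hneg htt') _)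
    exact m1.measurable.comp (hmeas.add_const b)
  have measneg : ∀ b : ℝ, Measurable fun x => erealPos (-(fStar f (h x + b))) := by
    intro b
    have m1 : Antitone fun t : ℝ => erealPos (-(fStar f t)) := fun t t' htt' =>
      erealPos_mono (EReal.neg_le_neg_iff.2 (fStar_mono hneg htt'))
    exact m1.measurable.comp (hmeas.add_const b)
  set J : ℝ → ℝ≥0∞ := fun b => ∫⁻ x, erealPos (fStar f (h x + b) + (S : EReal)) ∂Q with hJ
  have hGJ : ∀ b ∈ Set.Icc (-M) M, G b = ((J b : ℝ≥0∞) : EReal) - ((S + b : ℝ) : EReal) := by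
    intro b hb
    rw [hG]
    simp only
    rw [eintegral_eq_shift Q _ S hSnn (hlb b hb) (measneg b), ereal_sub_sub]
  -- key quantitative bound along the subsequence
  set u : ℕ → ℝ := fun n => bseq (σ n) with hu
  have hutend : Tendsto u atTop (𝓝 bstar) := hconvseq
  have humem : ∀ n, u n ∈ Set.Icc (-M) M := fun n => hMb (σ n)
  set q : ℕ → ℝ := fun n => r + 1/((σ n : ℝ)+1) + (S + u n) with hq
  have hJu : ∀ n, J (u n) ≤ ENNReal.ofReal (q n) := by
    intro n
    have hGlt : G (u n) < ((r + 1/((σ n : ℝ)+1) : ℝ) : EReal) := hbseq (σ n)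
    rw [hGJ (u n) (humem n)] at hGlt
    have hlt2 : ((J (u n) : ℝ≥0∞) : EReal) < ((r + 1/((σ n : ℝ)+1) : ℝ) : EReal) + ((S + u n : ℝ) : EReal) := by
      refine (EReal.sub_lt_iff (Or.inl ?_) (Or.inl ?_)).1 hGlt
      · exact EReal.coe_ne_bot _
      · exact EReal.coe_ne_top _
    rw [← EReal.coe_add] at hlt2
    have hle3 : ((J (u n) : ℝ≥0∞) : EReal) ≤ ((ENNReal.ofReal (q n) : ℝ≥0∞) : EReal) := by
      rw [EReal.coe_ennreal_ofReal]
      refine le_trans hlt2.le ?_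
      have hqn : q n = r + 1/((σ n : ℝ)+1) + (S + u n) := rfl
      rw [hqn]
      exact_mod_cast EReal.coe_le_coe_iff.2 (le_max_left _ _)
    exact EReal.coe_ennreal_le_coe_ennreal_iff.1 hle3
  -- Fatou
  have fatou : J bstar ≤ liminf (fun n => J (u n)) atTop := by
    have hpt : ∀ x, erealPos (fStar f (h x + bstar) + (S : EReal))
        ≤ liminf (fun n => erealPos (fStar f (h x + u n) + (S : EReal))) atTop := by
      intro x
      refine liminf_erealPos_shift _ _ _ ?_
      exact lsc_le_liminf (fStar_lsc hbot) (tendsto_const_nhds.add hutend)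
    calc J bstar ≤ ∫⁻ x, liminf (fun n => erealPos (fStar f (h x + u n) + (S : EReal))) atTop ∂Q :=
          lintegral_mono hpt
    _ ≤ liminf (fun n => J (u n)) atTop := lintegral_liminf_le fun n => measmono (u n)
  -- limit of the bound
  have hqtend : Tendsto q atTop (𝓝 (r + S + bstar)) := by
    have h1' : Tendsto (fun n : ℕ => 1/((σ n : ℝ)+1)) atTop (𝓝 0) :=
      tendsto_one_div_add_atTop_nhds_zero_nat.comp hσ.tendsto_atTop
    have h2' : Tendsto (fun n => r + 1/((σ n : ℝ)+1) + (S + u n)) atTop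
        (𝓝 (r + 0 + (S + bstar))) :=
      (tendsto_const_nhds.add h1').add (tendsto_const_nhds.add hutend)
    simpa [hq, add_assoc] using h2'
  have hlim : liminf (fun n => ENNReal.ofReal (q n)) atTop = ENNReal.ofReal (r + S + bstar) :=
    (ENNReal.continuous_ofReal.continuousAt.tendsto.comp hqtend).liminf_eq
  have hJb : J bstar ≤ ENNReal.ofReal (r + S + bstar) := by
    calc J bstar ≤ liminf (fun n => J (u n)) atTop := fatou
    _ ≤ liminf (fun n => ENNReal.ofReal (q n)) atTop :=
        liminf_le_liminf (Eventually.of_forall hJu)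
    _ = ENNReal.ofReal (r + S + bstar) := hlim
  have hqnn : 0 ≤ r + S + bstar := by
    rw [Set.mem_Icc] at hbstar
    have := neg_abs_le r
    rw [hS']
    linarith [hbstar.1]
  have hGb : G bstar ≤ (r : EReal) := by
    rw [hGJ bstar hbstar]
    calc ((J bstar : ℝ≥0∞) : EReal) - ((S + bstar : ℝ) : EReal)
        ≤ ((r + S + bstar : ℝ) : EReal) - ((S + bstar : ℝ) : EReal) := by
          refine EReal.sub_le_sub ?_ le_rfl
          calc ((J bstar : ℝ≥0∞) : EReal) ≤ ((ENNReal.ofReal (r + S + bstar) : ℝ≥0∞) : EReal) :=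
                EReal.coe_ennreal_le_coe_ennreal_iff.2 hJb
          _ = ((r + S + bstar : ℝ) : EReal) := coe_ofReal_ereal hqnn
    _ = (r : EReal) := by
        rw [← EReal.coe_sub]
        norm_num
  refine ⟨bstar, ?_⟩
  have hGoal : G bstar = Rfun Q f h := by
    refine le_antisymm (by rw [hRr]; exact hGb) ?_
    rw [hRdef]
    exact iInf_le _ bstar
  simpa only [hG] using hGoal
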